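/- Let R₁ = (s₃ + s₃⁻¹)² − s₁s₂(s₃ + s₃⁻¹) + s₁² + s₂² − 4 in ℂ[s₁,s₂,s₃,s₃⁻¹]. The ℂ-algebra homomorphism ℂ[s₁,s₂,s₃,s₃⁻¹]/(R₁) → ℂ[x₁,x₁⁻¹,x₂,x₂⁻¹] given by s₁ ↦ x₁ + x₁⁻¹, s₂ ↦ x₂ + x₂⁻¹, s₃ ↦ x₁x₂ is well-defined and injective, identifying the source with the subring ℂ[x₁+x₁⁻¹, x₂+x₂⁻¹, x₁x₂, x₁⁻¹x₂⁻¹]. -/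

import Mathlib

open LaurentPolynomial

namespace Stmt13

/-- The ring `ℂ[s₁,s₂][s₃,s₃⁻¹]`. -/
noncomputable abbrev S := LaurentPolynomial (MvPolynomial (Fin 2) ℂ)

/-- The ring `ℂ[x₁,x₁⁻¹][x₂,x₂⁻¹]`. -/
noncomputable abbrev Tgt := LaurentPolynomial (LaurentPolynomial ℂ)

noncomputable def s₁ : S := LaurentPolynomial.C (MvPolynomial.X 0)
noncomputable def s₂ : S := LaurentPolynomial.C (MvPolynomial.X 1)
noncomputable def s₃ : S := LaurentPolynomial.T 1
noncomputable def s₃inv : S := LaurentPolynomial.T (-1)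

/-- `R₁ = (s₃ + s₃⁻¹)² − s₁s₂(s₃ + s₃⁻¹) + s₁² + s₂² − 4`. -/
noncomputable def R₁ : S :=
  (s₃ + s₃inv) ^ 2 - s₁ * s₂ * (s₃ + s₃inv) + s₁ ^ 2 + s₂ ^ 2 - 4

noncomputable def x₁ : Tgt := LaurentPolynomial.C (LaurentPolynomial.T 1)
noncomputable def x₁inv : Tgt := LaurentPolynomial.C (LaurentPolynomial.T (-1))
noncomputable def x₂ : Tgt := LaurentPolynomial.T 1
noncomputable def x₂inv : Tgt := LaurentPolynomial.T (-1)

noncomputable def mk : S →ₐ[ℂ] S ⧸ Ideal.span {R₁} :=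
  Ideal.Quotient.mkₐ ℂ (Ideal.span {R₁})

/-! ### auxiliary material -/

noncomputable abbrev A := MvPolynomial (Fin 2) ℂ

open Polynomial in
lemma hs₃ : s₃ * s₃inv = 1 := by rw [s₃, s₃inv, ← T_add]; norm_num

lemma hx₁ : x₁ * x₁inv = 1 := by
  rw [x₁, x₁inv, ← map_mul, ← T_add]; norm_num

lemma hx₂ : x₂ * x₂inv = 1 := by rw [x₂, x₂inv, ← T_add]; norm_num

noncomputable def X₁ : Tgtˣ := ⟨x₁, x₁inv, hx₁, by rw [mul_comm]; exact hx₁⟩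
noncomputable def X₂ : Tgtˣ := ⟨x₂, x₂inv, hx₂, by rw [mul_comm]; exact hx₂⟩

lemma X₁_val : (X₁ : Tgt) = x₁ := rfl
lemma X₁inv_val : ((X₁⁻¹ : Tgtˣ) : Tgt) = x₁inv := rfl
lemma X₂_val : (X₂ : Tgt) = x₂ := rfl
lemma X₂inv_val : ((X₂⁻¹ : Tgtˣ) : Tgt) = x₂inv := rfl

section Builders
variable (B : Type*) [CommRing B] [Algebra ℂ B]

/-- generic hom out of `S` -/
noncomputable def ΨR (b₁ b₂ : B) (u : Bˣ) : S →+* B :=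
  AddMonoidAlgebra.liftNCRingHom
    ((MvPolynomial.aeval ![b₁, b₂] : A →ₐ[ℂ] B).toRingHom)
    ((Units.coeHom B).comp (zpowersHom Bˣ u)) (fun _ _ => Commute.all _ _)

lemma ΨR_single (b₁ b₂ : B) (u : Bˣ) (n : ℤ) (a : A) :
    ΨR B b₁ b₂ u (AddMonoidAlgebra.single n a) = MvPolynomial.aeval ![b₁, b₂] a * ↑(u ^ n) :=
  AddMonoidAlgebra.liftNC_single _ _ n a

lemma ΨR_C (b₁ b₂ : B) (u : Bˣ) (a : A) :
    ΨR B b₁ b₂ u (LaurentPolynomial.C a) = MvPolynomial.aeval ![b₁, b₂] a := by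
  have := ΨR_single B b₁ b₂ u 0 a
  simpa using this

lemma ΨR_T (b₁ b₂ : B) (u : Bˣ) (n : ℤ) :
    ΨR B b₁ b₂ u (LaurentPolynomial.T n) = ↑(u ^ n) := by
  have := ΨR_single B b₁ b₂ u n 1
  simpa using this

noncomputable def Ψ (b₁ b₂ : B) (u : Bˣ) : S →ₐ[ℂ] B :=
  AlgHom.mk' (ΨR B b₁ b₂ u) (by
    intro c x
    rw [Algebra.smul_def, Algebra.smul_def, map_mul]
    congr 1
    rw [LaurentPolynomial.algebraMap_apply, ΨR_C]
    simp)

lemma Ψ_apply (b₁ b₂ : B) (u : Bˣ) (f : S) : Ψ B b₁ b₂ u f = ΨR B b₁ b₂ u f := rfl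

lemma Ψ_s₁ (b₁ b₂ : B) (u : Bˣ) : Ψ B b₁ b₂ u s₁ = b₁ := by
  rw [Ψ_apply, s₁, ΨR_C]; simp

lemma Ψ_s₂ (b₁ b₂ : B) (u : Bˣ) : Ψ B b₁ b₂ u s₂ = b₂ := by
  rw [Ψ_apply, s₂, ΨR_C]; simp

lemma Ψ_s₃ (b₁ b₂ : B) (u : Bˣ) : Ψ B b₁ b₂ u s₃ = ↑u := by
  rw [Ψ_apply, s₃, ΨR_T]; simp

lemma Ψ_s₃inv (b₁ b₂ : B) (u : Bˣ) : Ψ B b₁ b₂ u s₃inv = ↑u⁻¹ := by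
  rw [Ψ_apply, s₃inv, ΨR_T]
  simp [zpow_neg]

/-- generic hom out of `Tgt`: first lift `ℂ[T,T⁻¹] → B`. -/
noncomputable def ΘR (u : Bˣ) : LaurentPolynomial ℂ →+* B :=
  AddMonoidAlgebra.liftNCRingHom (algebraMap ℂ B)
    ((Units.coeHom B).comp (zpowersHom Bˣ u)) (fun _ _ => Commute.all _ _)

lemma ΘR_single (u : Bˣ) (n : ℤ) (a : ℂ) :
    ΘR B u (AddMonoidAlgebra.single n a) = algebraMap ℂ B a * ↑(u ^ n) :=
  AddMonoidAlgebra.liftNC_single _ _ n a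

noncomputable def ΦR (u v : Bˣ) : Tgt →+* B :=
  AddMonoidAlgebra.liftNCRingHom (ΘR B u)
    ((Units.coeHom B).comp (zpowersHom Bˣ v)) (fun _ _ => Commute.all _ _)

lemma ΦR_single (u v : Bˣ) (n : ℤ) (a : LaurentPolynomial ℂ) :
    ΦR B u v (AddMonoidAlgebra.single n a) = ΘR B u a * ↑(v ^ n) :=
  AddMonoidAlgebra.liftNC_single _ _ n a

noncomputable def Φ (u v : Bˣ) : Tgt →ₐ[ℂ] B :=
  AlgHom.mk' (ΦR B u v) (by
    intro c x
    rw [Algebra.smul_def, Algebra.smul_def, map_mul]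
    congr 1
    rw [LaurentPolynomial.algebraMap_apply, LaurentPolynomial.algebraMap_apply]
    rw [show (LaurentPolynomial.C (LaurentPolynomial.C (algebraMap ℂ ℂ c)) : Tgt)
      = AddMonoidAlgebra.single 0 (LaurentPolynomial.C (algebraMap ℂ ℂ c)) from rfl, ΦR_single]
    rw [show (LaurentPolynomial.C (algebraMap ℂ ℂ c) : LaurentPolynomial ℂ)
      = AddMonoidAlgebra.single 0 (algebraMap ℂ ℂ c) from rfl, ΘR_single]
    simp)

lemma Φ_x₁ (u v : Bˣ) : Φ B u v x₁ = ↑u := by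
  rw [show Φ B u v x₁ = ΦR B u v (AddMonoidAlgebra.single 0 (LaurentPolynomial.T 1)) from rfl, ΦR_single,
    show (LaurentPolynomial.T 1 : LaurentPolynomial ℂ) = AddMonoidAlgebra.single (1:ℤ) (1:ℂ) from rfl,
    ΘR_single]
  simp

lemma Φ_x₁inv (u v : Bˣ) : Φ B u v x₁inv = ↑u⁻¹ := by
  rw [show Φ B u v x₁inv = ΦR B u v (AddMonoidAlgebra.single 0 (LaurentPolynomial.T (-1))) from rfl,
    ΦR_single,
    show (LaurentPolynomial.T (-1) : LaurentPolynomial ℂ) = AddMonoidAlgebra.single (-1:ℤ) (1:ℂ) from rfl,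
    ΘR_single]
  simp [zpow_neg]

lemma Φ_x₂ (u v : Bˣ) : Φ B u v x₂ = ↑v := by
  rw [show Φ B u v x₂ = ΦR B u v (AddMonoidAlgebra.single 1 1) from rfl, ΦR_single]
  simp

lemma Φ_x₂inv (u v : Bˣ) : Φ B u v x₂inv = ↑v⁻¹ := by
  rw [show Φ B u v x₂inv = ΦR B u v (AddMonoidAlgebra.single (-1) 1) from rfl, ΦR_single]
  simp [zpow_neg]

end Builders

/-! ### the map ψ -/

noncomputable def ev : A →ₐ[ℂ] Tgt := MvPolynomial.aeval ![x₁ + x₁inv, x₂ + x₂inv]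

noncomputable def ψ : S →ₐ[ℂ] Tgt := Ψ Tgt (x₁ + x₁inv) (x₂ + x₂inv) (X₁ * X₂)

lemma ψ_s₁ : ψ s₁ = x₁ + x₁inv := Ψ_s₁ _ _ _ _
lemma ψ_s₂ : ψ s₂ = x₂ + x₂inv := Ψ_s₂ _ _ _ _

lemma ψ_s₃ : ψ s₃ = x₁ * x₂ := by
  rw [ψ, Ψ_s₃]; rfl

lemma ψ_s₃inv : ψ s₃inv = x₁inv * x₂inv := by
  rw [ψ, Ψ_s₃inv, mul_inv_rev, Units.val_mul, X₁inv_val, X₂inv_val, mul_comm]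

lemma ψ_R₁ : ψ R₁ = 0 := by
  rw [R₁]
  simp only [map_add, map_sub, map_mul, map_pow, map_ofNat, ψ_s₁, ψ_s₂, ψ_s₃, ψ_s₃inv]
  linear_combination (2 - x₂^2 - x₂inv^2) * hx₁ + (2 - x₁^2 - x₁inv^2) * hx₂

/-! ### reduction modulo R₁ -/

open Polynomial in
noncomputable def eA : A := MvPolynomial.X 0 * MvPolynomial.X 1
noncomputable def cA : A := MvPolynomial.X 0 ^ 2 + MvPolynomial.X 1 ^ 2 - 2

open Polynomial

noncomputable def q : A[X] :=
  X ^ 4 - Polynomial.C eA * X ^ 3 + Polynomial.C cA * X ^ 2 - Polynomial.C eA * X + 1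
noncomputable def rP : A[X] :=
  X ^ 3 - Polynomial.C eA * X ^ 2 + Polynomial.C cA * X - Polynomial.C eA

lemma CmulC : (LaurentPolynomial.C eA : S) = s₁ * s₂ := by
  rw [s₁, s₂, ← map_mul]; rfl

lemma T2 : (T 2 : S) = s₃ * s₃ := by rw [s₃, ← T_add]; norm_num

lemma CcA : (LaurentPolynomial.C cA : S) = s₁ ^ 2 + s₂ ^ 2 - 2 := by
  rw [s₁, s₂, cA]
  push_cast [map_add, map_sub, map_pow, map_ofNat]
  norm_num

lemma L1 : (toLaurent q : S) = T 2 * R₁ := by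
  rw [q, R₁]
  simp only [map_add, map_sub, map_mul, map_pow, map_one, Polynomial.toLaurent_C,
    Polynomial.toLaurent_X]
  rw [CmulC, CcA, T2, show (T 1 : S) = s₃ from rfl]
  linear_combination (-(2*s₃^2 + s₃*s₃inv + 1 - s₁*s₂*s₃)) * hs₃

lemma L3 : (T (-1) : S) = T 1 * R₁ - toLaurent rP := by
  rw [rP, R₁]
  simp only [map_add, map_sub, map_mul, map_pow, map_one, Polynomial.toLaurent_C,
    Polynomial.toLaurent_X]
  rw [CmulC, CcA, show (T 1 : S) = s₃ from rfl, show (T (-1) : S) = s₃inv from rfl]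
  linear_combination (-(2*s₃ + s₃inv - s₁*s₂)) * hs₃

lemma hqmonic : q.Monic := by unfold q; monicity!

lemma hqdeg : q.degree = 4 := by unfold q; compute_degree!

lemma hrPdeg : rP.natDegree ≤ 3 := by unfold rP; compute_degree

lemma reduce_aux (n : ℕ) : ∀ F : A[X], ∃ (g : S) (p : A[X]), p.natDegree < 4 ∧
    (toLaurent F : S) * T (-(n : ℤ)) = g * R₁ + toLaurent p := by
  induction n with
  | zero =>
    intro F
    refine ⟨toLaurent (F /ₘ q) * T 2, F %ₘ q, ?_, ?_⟩
    · rcases eq_or_ne (F %ₘ q) 0 with h | h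
      · simp [h]
      · have := Polynomial.degree_modByMonic_lt F hqmonic
        rw [hqdeg] at this
        exact (Polynomial.natDegree_lt_iff_degree_lt h).2 (by exact_mod_cast this)
    · have hd := Polynomial.modByMonic_add_div F q
      calc (toLaurent F : S) * T (-(0:ℕ) : ℤ)
          = toLaurent (F %ₘ q + q * (F /ₘ q)) := by rw [hd]; norm_num
        _ = toLaurent (F %ₘ q) + toLaurent q * toLaurent (F /ₘ q) := by
            rw [map_add, map_mul]
        _ = toLaurent (F /ₘ q) * T 2 * R₁ + toLaurent (F %ₘ q) := by rw [L1]; ring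
  | succ n ih =>
    intro F
    obtain ⟨g, p, hp, he⟩ := ih F
    set a := p.coeff 0 with ha
    refine ⟨g * T (-1) + LaurentPolynomial.C a * T 1, p.divX - Polynomial.C a * rP, ?_, ?_⟩
    · refine lt_of_le_of_lt (Polynomial.natDegree_sub_le _ _) ?_
      refine Nat.lt_succ_of_le (max_le ?_ ?_)
      · exact le_trans Polynomial.natDegree_divX_le (by omega)
      · exact le_trans (Polynomial.natDegree_C_mul_le _ _) hrPdeg
    · have hX : (toLaurent p : S) = T 1 * toLaurent p.divX + LaurentPolynomial.C a := by
        conv_lhs => rw [← Polynomial.X_mul_divX_add p]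
        rw [map_add, map_mul, Polynomial.toLaurent_X, Polynomial.toLaurent_C]
      have hT : (T (-(n+1:ℕ) : ℤ) : S) = T (-(n:ℤ)) * T (-1) := by
        rw [← T_add]
        congr 1
        push_cast
        ring
      have hrw : (toLaurent (p.divX - Polynomial.C a * rP) : S)
          = toLaurent p.divX - LaurentPolynomial.C a * toLaurent rP := by
        rw [map_sub, map_mul, Polynomial.toLaurent_C]
      rw [hT, ← mul_assoc, he, hrw]
      have h1 : (T 1 : S) * T (-1) = 1 := hs₃
      linear_combination (T (-1) : S) * hX + (toLaurent p.divX : S) * h1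
        + (LaurentPolynomial.C a : S) * L3

lemma reduce (f : S) : ∃ (g : S) (p : A[X]), p.natDegree < 4 ∧
    f = g * R₁ + toLaurent p := by
  obtain ⟨n, F, hF⟩ := f.exists_T_pow
  obtain ⟨g, p, hp, he⟩ := reduce_aux n F
  refine ⟨g, p, hp, ?_⟩
  have : f = toLaurent F * T (-(n:ℤ)) := by
    rw [hF, mul_assoc, ← T_add]
    simp
  rw [this, he]

/-! ### ψ on polynomials -/

lemma ψ_toLaurent (P : A[X]) :
    ψ (toLaurent P) = Polynomial.eval₂ (ev.toRingHom) (x₁ * x₂) P := by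
  have : (ψ.toRingHom.comp toLaurent : A[X] →+* Tgt)
      = Polynomial.eval₂RingHom (ev.toRingHom) (x₁ * x₂) := by
    apply Polynomial.ringHom_ext
    · intro a
      rw [RingHom.comp_apply, Polynomial.toLaurent_C, Polynomial.coe_eval₂RingHom,
        Polynomial.eval₂_C]
      show ψ (LaurentPolynomial.C a) = ev a
      rw [ψ, Ψ_apply, ΨR_C]; rfl
    · rw [RingHom.comp_apply, Polynomial.toLaurent_X, Polynomial.coe_eval₂RingHom,
        Polynomial.eval₂_X]
      exact ψ_s₃
  have h2 := RingHom.congr_fun this P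
  simpa using h2

/-! ### Vandermonde step -/

lemma fixes_ev (u v : Tgtˣ) (h1 : (↑u + ↑u⁻¹ : Tgt) = x₁ + x₁inv)
    (h2 : (↑v + ↑v⁻¹ : Tgt) = x₂ + x₂inv) (a : A) :
    Φ Tgt u v (ev a) = ev a := by
  have : (Φ Tgt u v).comp ev = ev := by
    apply MvPolynomial.algHom_ext
    intro i
    fin_cases i <;>
      simp [ev, map_add, Φ_x₁, Φ_x₁inv, Φ_x₂, Φ_x₂inv, h1, h2]
  exact AlgHom.congr_fun this a

noncomputable def Rt : Fin 4 → Tgt := ![x₁ * x₂, x₁ * x₂inv, x₁inv * x₂, x₁inv * x₂inv]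

noncomputable def u2 : ℂˣ := Units.mk0 2 (by norm_num)
noncomputable def u3 : ℂˣ := Units.mk0 3 (by norm_num)

lemma eval23 : Φ ℂ u2 u3 ∘ Rt = ![6, 2/3, 3/2, 1/6] := by
  funext k
  fin_cases k <;>
    simp [Rt, Φ_x₁, Φ_x₁inv, Φ_x₂, Φ_x₂inv, u2, u3] <;> norm_num

lemma Rt_inj : Function.Injective Rt := by
  intro i j hij
  have h2 : (![(6:ℂ), 2/3, 3/2, 1/6]) i = (![(6:ℂ), 2/3, 3/2, 1/6]) j := by
    rw [← congrFun eval23 i, ← congrFun eval23 j, Function.comp_apply, Function.comp_apply, hij]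
  fin_cases i <;> fin_cases j <;> first
    | rfl
    | (exfalso
       simp only [Matrix.cons_val_zero, Matrix.cons_val_one, Matrix.head_cons,
         Matrix.cons_val_two, Matrix.tail_cons, Matrix.cons_val_three, Fin.isValue] at h2
       norm_num at h2)

lemma vand (c : Fin 4 → A) (h : ∑ i : Fin 4, ev (c i) * (x₁ * x₂) ^ (i : ℕ) = 0) :
    ∀ i, ev (c i) = 0 := by
  haveI : IsDomain Tgt := NoZeroDivisors.to_isDomain _
  have key : ∀ j : Fin 4, ∑ i : Fin 4, ev (c i) * Rt j ^ (i : ℕ) = 0 := by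
    intro j
    have main : ∀ (u v : Tgtˣ), (↑u + ↑u⁻¹ : Tgt) = x₁ + x₁inv →
        (↑v + ↑v⁻¹ : Tgt) = x₂ + x₂inv →
        ∑ i : Fin 4, ev (c i) * ((u : Tgt) * v) ^ (i : ℕ) = 0 := by
      intro u v h1 h2
      have := congrArg (Φ Tgt u v) h
      rw [map_sum, map_zero] at this
      simpa only [map_mul, map_pow, fixes_ev u v h1 h2, Φ_x₁, Φ_x₂] using this
    have hu1 : ((X₁⁻¹)⁻¹ : Tgtˣ) = X₁ := inv_inv _
    have hv1 : ((X₂⁻¹)⁻¹ : Tgtˣ) = X₂ := inv_inv _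
    fin_cases j
    · simpa [Rt, X₁_val, X₂_val] using main X₁ X₂ rfl rfl
    · simpa [Rt, X₁_val, X₂inv_val] using
        main X₁ X₂⁻¹ rfl (by rw [hv1, X₂inv_val, X₂_val, add_comm])
    · simpa [Rt, X₁inv_val, X₂_val] using
        main X₁⁻¹ X₂ (by rw [hu1, X₁inv_val, X₁_val, add_comm]) rfl
    · simpa [Rt, X₁inv_val, X₂inv_val] using
        main X₁⁻¹ X₂⁻¹ (by rw [hu1, X₁inv_val, X₁_val, add_comm])
          (by rw [hv1, X₂inv_val, X₂_val, add_comm])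
  have := Matrix.eq_zero_of_forall_index_sum_mul_pow_eq_zero Rt_inj key
  intro i
  exact congrFun this i

/-! ### injectivity of ev -/

lemma exists_half (u : ℂ) : ∃ a : ℂ, a ≠ 0 ∧ a + a⁻¹ = u := by
  have hdeg : (X ^ 2 - Polynomial.C u * X + 1 : ℂ[X]).degree = 2 := by compute_degree!
  obtain ⟨z, hz⟩ := IsAlgClosed.exists_root (X ^ 2 - Polynomial.C u * X + 1 : ℂ[X])
    (by rw [hdeg]; norm_num)
  have hz' : z ^ 2 - u * z + 1 = 0 := by simpa [Polynomial.IsRoot] using hz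
  have hz0 : z ≠ 0 := by
    intro h
    rw [h] at hz'
    norm_num at hz'
  refine ⟨z, hz0, ?_⟩
  field_simp
  linear_combination hz'

lemma ev_inj (a : A) (h : ev a = 0) : a = 0 := by
  have : ∀ x : Fin 2 → ℂ, MvPolynomial.eval x a = MvPolynomial.eval x 0 := by
    intro x
    obtain ⟨z, hz0, hz⟩ := exists_half (x 0)
    obtain ⟨w, hw0, hw⟩ := exists_half (x 1)
    have hcomp : ((Φ ℂ (Units.mk0 z hz0) (Units.mk0 w hw0)).comp ev : A →ₐ[ℂ] ℂ)
        = MvPolynomial.aeval x := by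
      apply MvPolynomial.algHom_ext
      intro i
      fin_cases i <;>
        simp [ev, map_add, Φ_x₁, Φ_x₁inv, Φ_x₂, Φ_x₂inv, Units.mk0, hz, hw]
    have h3 := AlgHom.congr_fun hcomp a
    rw [AlgHom.comp_apply, h, map_zero] at h3
    have h4 : MvPolynomial.eval x a = MvPolynomial.aeval x a := by
      rw [← MvPolynomial.coe_aeval_eq_eval]
      rfl
    rw [map_zero, h4, ← h3]
  exact MvPolynomial.funext this

/-! ### kernel -/

lemma hker (f : S) (hf : ψ f = 0) : f ∈ Ideal.span {R₁} := by
  obtain ⟨g, p, hp, he⟩ := reduce f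
  have hψp : ψ (toLaurent p) = 0 := by
    have := congrArg ψ he
    rw [hf, map_add, map_mul, ψ_R₁, mul_zero, zero_add] at this
    exact this.symm
  have hsum : ∑ i : Fin 4, ev (p.coeff i) * (x₁ * x₂) ^ (i : ℕ) = 0 := by
    rw [ψ_toLaurent] at hψp
    rw [Polynomial.eval₂_eq_sum_range' ev.toRingHom hp (x₁ * x₂)] at hψp
    rw [Fin.sum_univ_eq_sum_range (fun i => ev (p.coeff i) * (x₁ * x₂) ^ i) 4]
    exact hψp
  have hc := vand (fun i => p.coeff i) hsum
  have hp0 : p = 0 := by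
    apply Polynomial.ext
    intro n
    rw [Polynomial.coeff_zero]
    rcases lt_or_ge n 4 with hn | hn
    · exact ev_inj _ (hc ⟨n, hn⟩)
    · exact Polynomial.coeff_eq_zero_of_natDegree_lt (lt_of_lt_of_le hp hn)
  rw [hp0] at he
  simp only [map_zero, add_zero] at he
  rw [Ideal.mem_span_singleton]
  exact ⟨g, by rw [he, mul_comm]⟩

/-! ### adjoin top -/

lemma adjoin_top : Algebra.adjoin ℂ ({s₁, s₂, s₃, s₃inv} : Set S) = ⊤ := by
  rw [eq_top_iff]
  rintro f -
  induction f using LaurentPolynomial.induction_on' with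
  | add p q hp hq => exact Subalgebra.add_mem _ hp hq
  | C_mul_T n a =>
    apply Subalgebra.mul_mem
    · -- C a ∈ adjoin
      induction a using MvPolynomial.induction_on with
      | C r =>
        have : (LaurentPolynomial.C (MvPolynomial.C r) : S) = algebraMap ℂ S r := rfl
        rw [this]
        exact Subalgebra.algebraMap_mem _ r
      | add p q hp hq => rw [map_add]; exact Subalgebra.add_mem _ hp hq
      | mul_X p i hp =>
        rw [map_mul]
        apply Subalgebra.mul_mem _ hp
        fin_cases i
        · exact Algebra.subset_adjoin (by simp [s₁])
        · exact Algebra.subset_adjoin (by simp [s₂])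
    · -- T n ∈ adjoin
      rcases n with m | m
      · have : (T (Int.ofNat m) : S) = s₃ ^ m := by
          rw [s₃, T_pow]; norm_num
        rw [this]
        exact Subalgebra.pow_mem _ (Algebra.subset_adjoin (by simp)) m
      · have : (T (Int.negSucc m) : S) = s₃inv ^ (m + 1) := by
          rw [s₃inv, T_pow]
          congr 1
          rw [Int.negSucc_eq]
          push_cast
          ring
        rw [this]
        exact Subalgebra.pow_mem _ (Algebra.subset_adjoin (by simp)) (m + 1)

/-! ### main theorem -/

theorem stmt_13 :
    ∃ φ : (S ⧸ Ideal.span {R₁}) →ₐ[ℂ] Tgt,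
      φ (mk s₁) = x₁ + x₁inv ∧
      φ (mk s₂) = x₂ + x₂inv ∧
      φ (mk s₃) = x₁ * x₂ ∧
      φ (mk s₃inv) = x₁inv * x₂inv ∧
      Function.Injective φ ∧
      φ.range = Algebra.adjoin ℂ {x₁ + x₁inv, x₂ + x₂inv, x₁ * x₂, x₁inv * x₂inv} := by
  have hannih : ∀ a : S, a ∈ Ideal.span {R₁} → ψ a = 0 := by
    intro a ha
    rw [Ideal.mem_span_singleton] at ha
    obtain ⟨c, rfl⟩ := ha
    rw [map_mul, ψ_R₁, zero_mul]
  refine ⟨Ideal.Quotient.liftₐ (Ideal.span {R₁}) ψ hannih, ?_, ?_, ?_, ?_, ?_, ?_⟩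
  · rw [show mk s₁ = Ideal.Quotient.mk (Ideal.span {R₁}) s₁ from rfl,
      Ideal.Quotient.liftₐ_apply]
    exact ψ_s₁
  · rw [show mk s₂ = Ideal.Quotient.mk (Ideal.span {R₁}) s₂ from rfl,
      Ideal.Quotient.liftₐ_apply]
    exact ψ_s₂
  · rw [show mk s₃ = Ideal.Quotient.mk (Ideal.span {R₁}) s₃ from rfl,
      Ideal.Quotient.liftₐ_apply]
    exact ψ_s₃
  · rw [show mk s₃inv = Ideal.Quotient.mk (Ideal.span {R₁}) s₃inv from rfl,
      Ideal.Quotient.liftₐ_apply]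
    exact ψ_s₃inv
  · rw [injective_iff_map_eq_zero]
    intro x hx
    obtain ⟨f, rfl⟩ := Ideal.Quotient.mkₐ_surjective ℂ (Ideal.span {R₁}) x
    have : ψ f = 0 := by
      rw [show (Ideal.Quotient.mkₐ ℂ (Ideal.span {R₁})) f
        = Ideal.Quotient.mk (Ideal.span {R₁}) f from rfl, Ideal.Quotient.liftₐ_apply] at hx
      exact hx
    have hz := hker f this
    rwa [Ideal.Quotient.mkₐ_eq_mk, Ideal.Quotient.eq_zero_iff_mem]
  · have hcomp : (Ideal.Quotient.liftₐ (Ideal.span {R₁}) ψ hannih).comp mk = ψ :=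
      Ideal.Quotient.liftₐ_comp _ _ _
    have h1 : ψ.range = (Ideal.Quotient.liftₐ (Ideal.span {R₁}) ψ hannih).range := by
      conv_lhs => rw [← hcomp]
      rw [AlgHom.range_comp]
      have : mk.range = ⊤ := by
        rw [AlgHom.range_eq_top]
        exact Ideal.Quotient.mkₐ_surjective ℂ _
      rw [this, Algebra.map_top]
    rw [← h1]
    have h2 : ψ.range = (Algebra.adjoin ℂ ({s₁, s₂, s₃, s₃inv} : Set S)).map ψ := by
      rw [adjoin_top, Algebra.map_top]
    rw [h2, AlgHom.map_adjoin]
    congr 1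
    simp only [Set.image_insert_eq, Set.image_singleton, ψ_s₁, ψ_s₂, ψ_s₃, ψ_s₃inv]

end Stmt13
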